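/- Let (X, Y) be a pair of real-valued random variables on a probability space with E[X²] < ∞ and E[Y²] < ∞, and suppose there is a constant c ∈ [0,1) such that for all a, b ∈ ℝ, P(X ≥ a and Y ≥ b) ≥ c·P(X ≥ a)·P(Y ≥ b). Then Cov(X,Y) ≥ −√((1 − c)·Var(X)·Var(Y)). -/

import Mathlib

open MeasureTheory Set

noncomputable section

namespace Stmt5

lemma bddInt {α : Type*} [MeasurableSpace α] (m : Measure α) [IsFiniteMeasure m]
    {f : α → ℝ} (hf : AEStronglyMeasurable f m) {C : ℝ} (h : ∀ x, |f x| ≤ C) :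
    Integrable f m :=
  (integrable_const C).mono' hf (Filter.Eventually.of_forall (by simpa using h))

lemma intInd (E : Set ℝ) (hE : MeasurableSet E) :
    ∫ u in Ioo (0:ℝ) 1, E.indicator (fun _ => (1:ℝ)) u = (volume (E ∩ Ioo 0 1)).toReal := by
  rw [integral_indicator hE, setIntegral_const, measureReal_def, Measure.restrict_apply hE]
  simp

lemma J1 {s : ℝ} (h0 : 0 ≤ s) (h1 : s ≤ 1) :
    ∫ u in Ioo (0:ℝ) 1, (if u < s then (1:ℝ) else 0) = s := by
  have e : (fun u : ℝ => if u < s then (1:ℝ) else 0) = (Iio s).indicator (fun _ => (1:ℝ)) := by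
    funext u; simp [Set.indicator_apply, mem_Iio]
  rw [e, intInd _ measurableSet_Iio]
  have : Iio s ∩ Ioo 0 1 = Ioo 0 s := by
    ext u; simp only [mem_inter_iff, mem_Iio, mem_Ioo]
    constructor
    · rintro ⟨h1', h2', _⟩; exact ⟨h2', h1'⟩
    · rintro ⟨h1', h2'⟩; exact ⟨h2', h1', by linarith⟩
  rw [this, Real.volume_Ioo, ENNReal.toReal_ofReal (by linarith)]
  ring

lemma J5 {s : ℝ} (h0 : 0 ≤ s) (h1 : s ≤ 1) :
    ∫ u in Ioo (0:ℝ) 1, (if s < u then (1:ℝ) else 0) = 1 - s := by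
  have e : (fun u : ℝ => if s < u then (1:ℝ) else 0) = (Ioi s).indicator (fun _ => (1:ℝ)) := by
    funext u; simp [Set.indicator_apply, mem_Ioi]
  rw [e, intInd _ measurableSet_Ioi]
  have : Ioi s ∩ Ioo 0 1 = Ioo s 1 := by
    ext u; simp only [mem_inter_iff, mem_Ioi, mem_Ioo]
    constructor
    · rintro ⟨h1', _, h3'⟩; exact ⟨h1', h3'⟩
    · rintro ⟨h1', h2'⟩; exact ⟨h1', by linarith, h2'⟩
  rw [this, Real.volume_Ioo, ENNReal.toReal_ofReal (by linarith)]

lemma J2 {s t : ℝ} (h0 : 0 ≤ s) (h1 : s ≤ 1) (h0' : 0 ≤ t) (h1' : t ≤ 1) :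
    ∫ u in Ioo (0:ℝ) 1, (if u < s then (1:ℝ) else 0) * (if u < t then (1:ℝ) else 0)
      = min s t := by
  have e : (fun u : ℝ => (if u < s then (1:ℝ) else 0) * (if u < t then (1:ℝ) else 0))
      = fun u : ℝ => if u < min s t then (1:ℝ) else 0 := by
    funext u; by_cases h : u < s <;> by_cases h' : u < t <;> simp [h, h', lt_min_iff]
  rw [e, J1 (le_min h0 h0') (min_le_of_left_le h1)]

lemma J3 {s t : ℝ} (h0 : 0 ≤ s) (h1 : s ≤ 1) (h0' : 0 ≤ t) (h1' : t ≤ 1) :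
    ∫ u in Ioo (0:ℝ) 1, (if u < s then (1:ℝ) else 0) * (if t < u then (1:ℝ) else 0)
      = max (s - t) 0 := by
  have e : (fun u : ℝ => (if u < s then (1:ℝ) else 0) * (if t < u then (1:ℝ) else 0))
      = (Ioo t s).indicator (fun _ => (1:ℝ)) := by
    funext u; by_cases h : u < s <;> by_cases h' : t < u <;>
      simp [h, h', Set.indicator_apply, mem_Ioo]
  rw [e, intInd _ measurableSet_Ioo]
  have : Ioo t s ∩ Ioo 0 1 = Ioo t s := by
    apply inter_eq_self_of_subset_left
    intro u hu; rcases hu with ⟨ht, hs⟩; exact ⟨by linarith, by linarith⟩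
  rw [this]
  rcases le_total t s with h | h
  · rw [Real.volume_Ioo, ENNReal.toReal_ofReal (by linarith), max_eq_left (by linarith)]
  · rw [Ioo_eq_empty (not_lt.2 h), measure_empty]
    simp [max_eq_right (by linarith : s - t ≤ 0)]

lemma J4 {s t : ℝ} (h0 : 0 ≤ s) (h1 : s ≤ 1) (h0' : 0 ≤ t) (h1' : t ≤ 1) :
    ∫ u in Ioo (0:ℝ) 1, (if s < u then (1:ℝ) else 0) * (if t < u then (1:ℝ) else 0)
      = 1 - max s t := by
  have e : (fun u : ℝ => (if s < u then (1:ℝ) else 0) * (if t < u then (1:ℝ) else 0))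
      = fun u : ℝ => if max s t < u then (1:ℝ) else 0 := by
    funext u; by_cases h : s < u <;> by_cases h' : t < u <;> simp [h, h', max_lt_iff]
  rw [e, J5 (le_max_of_le_left h0) (max_le h1 h1')]


/-! ### Gram identities on the unit interval -/

def psif (c y : ℝ) : ℝ → ℝ := fun u =>
  (1 - c*y) * ((1 - (1-y)/(1-c*y)) - (if (1-y)/(1-c*y) < u then 1 else 0))

lemma beta_pos {c y : ℝ} (hc0 : 0 ≤ c) (hc1 : c < 1) (hy : y ∈ Icc (0:ℝ) 1) :
    0 < 1 - c*y := by nlinarith [hy.1, hy.2]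

lemma xi_mem {c y : ℝ} (hc0 : 0 ≤ c) (hc1 : c < 1) (hy : y ∈ Icc (0:ℝ) 1) :
    (1-y)/(1-c*y) ∈ Icc (0:ℝ) 1 := by
  have hb := beta_pos hc0 hc1 hy
  constructor
  · exact div_nonneg (by linarith [hy.2]) hb.le
  · rw [div_le_one hb]; nlinarith [hy.1]

lemma xi_anti {c y y' : ℝ} (hc0 : 0 ≤ c) (hc1 : c < 1) (hy : y ∈ Icc (0:ℝ) 1)
    (hy' : y' ∈ Icc (0:ℝ) 1) (hle : y ≤ y') :
    (1-y')/(1-c*y') ≤ (1-y)/(1-c*y) := by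
  have hb := beta_pos hc0 hc1 hy
  have hb' := beta_pos hc0 hc1 hy'
  rw [div_le_div_iff₀ hb' hb]
  nlinarith [hy.1, hy'.2]

lemma indIntegrable (s : ℝ) : Integrable (fun u : ℝ => if u < s then (1:ℝ) else 0)
    (volume.restrict (Ioo (0:ℝ) 1)) := by
  apply bddInt _ (Measurable.aestronglyMeasurable ?_) (C := 1) ?_
  · exact Measurable.ite measurableSet_Iio measurable_const measurable_const
  · intro x; split_ifs <;> simp

lemma indIntegrable' (s : ℝ) : Integrable (fun u : ℝ => if s < u then (1:ℝ) else 0)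
    (volume.restrict (Ioo (0:ℝ) 1)) := by
  apply bddInt _ (Measurable.aestronglyMeasurable ?_) (C := 1) ?_
  · exact Measurable.ite measurableSet_Ioi measurable_const measurable_const
  · intro x; split_ifs <;> simp

lemma integral_comb {m : Measure ℝ} [IsFiniteMeasure m] {f g h : ℝ → ℝ} (c1 c2 c3 c4 : ℝ)
    (hf : Integrable f m) (hg : Integrable g m) (hh : Integrable h m) :
    ∫ u, (c1 * f u + (c2 * g u + (c3 * h u + c4))) ∂m
      = c1 * (∫ u, f u ∂m) + (c2 * (∫ u, g u ∂m) + (c3 * (∫ u, h u ∂m)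
        + c4 * (m univ).toReal)) := by
  have h3 : Integrable (fun u => c3 * h u + c4) m := (hh.const_mul c3).add (integrable_const c4)
  have h2 : Integrable (fun u => c2 * g u + (c3 * h u + c4)) m := (hg.const_mul c2).add h3
  rw [integral_add (hf.const_mul c1) h2, integral_add (hg.const_mul c2) h3,
      integral_add (hh.const_mul c3) (integrable_const c4),
      integral_const_mul, integral_const_mul, integral_const_mul, integral_const]
  simp [smul_eq_mul, mul_comm, measureReal_def]

lemma lamUniv : ((volume.restrict (Ioo (0:ℝ) 1)) univ).toReal = 1 := by
  simp [Measure.restrict_apply_univ, Real.volume_Ioo]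

lemma gramXX {x x' : ℝ} (hx : x ∈ Icc (0:ℝ) 1) (hx' : x' ∈ Icc (0:ℝ) 1) :
    ∫ u in Ioo (0:ℝ) 1, ((if u < x then (1:ℝ) else 0) - x) * ((if u < x' then (1:ℝ) else 0) - x')
      = min x x' - x*x' := by
  have hi1 := indIntegrable x
  have hi2 := indIntegrable x'
  have hi12 : Integrable (fun u : ℝ => (if u < x then (1:ℝ) else 0) * (if u < x' then (1:ℝ) else 0))
      (volume.restrict (Ioo (0:ℝ) 1)) := by
    apply bddInt _ (Measurable.aestronglyMeasurable ?_) (C := 1) ?_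
    · exact (Measurable.ite measurableSet_Iio measurable_const measurable_const).mul
        (Measurable.ite measurableSet_Iio measurable_const measurable_const)
    · intro u; split_ifs <;> norm_num
  have e : (fun u : ℝ => ((if u < x then (1:ℝ) else 0) - x) * ((if u < x' then (1:ℝ) else 0) - x'))
      = fun u : ℝ => (1:ℝ) * ((if u < x then (1:ℝ) else 0) * (if u < x' then (1:ℝ) else 0))
          + ((-x') * (if u < x then (1:ℝ) else 0) + ((-x) * (if u < x' then (1:ℝ) else 0)
          + x*x')) := by
    funext u; ring
  rw [e, integral_comb 1 (-x') (-x) (x*x') hi12 hi1 hi2,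
      J1 hx.1 hx.2, J1 hx'.1 hx'.2, J2 hx.1 hx.2 hx'.1 hx'.2, lamUniv]
  ring

lemma gramYY_le {c y y' : ℝ} (hc0 : 0 ≤ c) (hc1 : c < 1) (hy : y ∈ Icc (0:ℝ) 1)
    (hy' : y' ∈ Icc (0:ℝ) 1) (hle : y ≤ y') :
    ∫ u in Ioo (0:ℝ) 1, psif c y u * psif c y' u = (1-c) * (y * (1 - y')) := by
  have hb := beta_pos hc0 hc1 hy
  have hb' := beta_pos hc0 hc1 hy'
  have hX := xi_mem hc0 hc1 hy
  have hX' := xi_mem hc0 hc1 hy'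
  have hXX' := xi_anti hc0 hc1 hy hy' hle
  have hbX : (1 - c*y) * ((1-y)/(1-c*y)) = 1 - y := by field_simp
  have hb'X' : (1 - c*y') * ((1-y')/(1-c*y')) = 1 - y' := by field_simp
  set b := 1 - c*y with hbdef
  set b' := 1 - c*y' with hb'def
  set X := (1-y)/b with hXdef
  set X' := (1-y')/b' with hX'def
  have hiX := indIntegrable' X
  have hiX' := indIntegrable' X'
  have hiXX' : Integrable (fun u : ℝ => (if X < u then (1:ℝ) else 0) * (if X' < u then (1:ℝ) else 0))
      (volume.restrict (Ioo (0:ℝ) 1)) := by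
    apply bddInt _ (Measurable.aestronglyMeasurable ?_) (C := 1) ?_
    · exact (Measurable.ite measurableSet_Ioi measurable_const measurable_const).mul
        (Measurable.ite measurableSet_Ioi measurable_const measurable_const)
    · intro u; split_ifs <;> norm_num
  have e : (fun u : ℝ => psif c y u * psif c y' u)
      = fun u : ℝ => (b*b') * ((if X < u then (1:ℝ) else 0) * (if X' < u then (1:ℝ) else 0))
          + ((-(b*(1-X)*b')) * (if X' < u then (1:ℝ) else 0)
          + ((-(b'*(1-X')*b)) * (if X < u then (1:ℝ) else 0)
          + (b*(1-X))*(b'*(1-X')))) := by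
    funext u; simp only [psif, ← hbdef, ← hb'def, ← hXdef, ← hX'def]; ring
  rw [e, integral_comb _ _ _ _ hiXX' hiX' hiX,
      J5 hX'.1 hX'.2, J5 hX.1 hX.2, J4 hX.1 hX.2 hX'.1 hX'.2, max_eq_left hXX', lamUniv]
  linear_combination (b'*X') * hbdef - (b'*X') * hbX + ((1-c)*y) * hb'X'

lemma gramYY {c y y' : ℝ} (hc0 : 0 ≤ c) (hc1 : c < 1) (hy : y ∈ Icc (0:ℝ) 1)
    (hy' : y' ∈ Icc (0:ℝ) 1) :
    ∫ u in Ioo (0:ℝ) 1, psif c y u * psif c y' u = (1-c) * (min y y' - y*y') := by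
  rcases le_total y y' with h | h
  · rw [gramYY_le hc0 hc1 hy hy' h, min_eq_left h]; ring
  · have e : ∫ u in Ioo (0:ℝ) 1, psif c y u * psif c y' u
        = ∫ u in Ioo (0:ℝ) 1, psif c y' u * psif c y u := by
      apply integral_congr_ae; filter_upwards with u; ring
    rw [e, gramYY_le hc0 hc1 hy' hy h, min_eq_right h]; ring

lemma gramXY {c x y : ℝ} (hc0 : 0 ≤ c) (hc1 : c < 1) (hx : x ∈ Icc (0:ℝ) 1)
    (hy : y ∈ Icc (0:ℝ) 1) :
    ∫ u in Ioo (0:ℝ) 1, ((if u < x then (1:ℝ) else 0) - x) * psif c y u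
      = min ((1-c)*(x*y)) ((1-x)*(1-y)) := by
  have hb := beta_pos hc0 hc1 hy
  have hX := xi_mem hc0 hc1 hy
  have hbX : (1 - c*y) * ((1-y)/(1-c*y)) = 1 - y := by field_simp
  set b := 1 - c*y with hbdef
  set X := (1-y)/b with hXdef
  have hi := indIntegrable x
  have hiX := indIntegrable' X
  have himix : Integrable (fun u : ℝ => (if u < x then (1:ℝ) else 0) * (if X < u then (1:ℝ) else 0))
      (volume.restrict (Ioo (0:ℝ) 1)) := by
    apply bddInt _ (Measurable.aestronglyMeasurable ?_) (C := 1) ?_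
    · exact (Measurable.ite measurableSet_Iio measurable_const measurable_const).mul
        (Measurable.ite measurableSet_Ioi measurable_const measurable_const)
    · intro u; split_ifs <;> norm_num
  have e : (fun u : ℝ => ((if u < x then (1:ℝ) else 0) - x) * psif c y u)
      = fun u : ℝ => (-b) * ((if u < x then (1:ℝ) else 0) * (if X < u then (1:ℝ) else 0))
          + ((b*(1-X)) * (if u < x then (1:ℝ) else 0)
          + ((x*b) * (if X < u then (1:ℝ) else 0)
          + (-(x*b*(1-X))))) := by
    funext u; simp only [psif, ← hbdef, ← hXdef]; ring
  rw [e, integral_comb _ _ _ _ himix hi hiX,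
      J1 hx.1 hx.2, J5 hX.1 hX.2, J3 hx.1 hx.2 hX.1 hX.2, lamUniv]
  rcases le_total x X with hxX | hXx
  · rw [max_eq_right (by linarith), min_eq_left ?_]
    · linear_combination x * hbdef - x * hbX
    · have h1 : b*x ≤ 1 - y := by
        calc b*x ≤ b*X := mul_le_mul_of_nonneg_left hxX hb.le
        _ = 1 - y := hbX
      nlinarith [hx.1, hx.2, hy.1, hy.2]
  · rw [max_eq_left (by linarith), min_eq_right ?_]
    · linear_combination (1-x) * hbX
    · have h1 : 1 - y ≤ b*x := by
        calc (1:ℝ) - y = b*X := hbX.symm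
        _ ≤ b*x := mul_le_mul_of_nonneg_left hXx hb.le
      nlinarith [hx.1, hx.2, hy.1, hy.2]


/-! ### Hoeffding covariance identity (bounded case) -/

lemma integral_comb4 {α : Type*} [MeasurableSpace α] (m : Measure α) {f g h k : α → ℝ}
    (c1 c2 c3 c4 : ℝ) (hf : Integrable f m) (hg : Integrable g m) (hh : Integrable h m)
    (hk : Integrable k m) :
    ∫ u, (c1 * f u + (c2 * g u + (c3 * h u + c4 * k u))) ∂m
      = c1 * (∫ u, f u ∂m) + (c2 * (∫ u, g u ∂m) + (c3 * (∫ u, h u ∂m)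
        + c4 * (∫ u, k u ∂m))) := by
  have h3 : Integrable (fun u => c3 * h u + c4 * k u) m := (hh.const_mul c3).add (hk.const_mul c4)
  have h2 : Integrable (fun u => c2 * g u + (c3 * h u + c4 * k u)) m := (hg.const_mul c2).add h3
  rw [integral_add (hf.const_mul c1) h2, integral_add (hg.const_mul c2) h3,
      integral_add (hh.const_mul c3) (hk.const_mul c4),
      integral_const_mul, integral_const_mul, integral_const_mul, integral_const_mul]

lemma L0 {R x : ℝ} (h1 : -R ≤ x) (h2 : x ≤ R) :
    ∫ a in Icc (-R) R, (if a ≤ x then (1:ℝ) else 0) = x + R := by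
  have e : (fun a : ℝ => if a ≤ x then (1:ℝ) else 0) = (Iic x).indicator (fun _ => (1:ℝ)) := by
    funext a; simp [indicator_apply, mem_Iic]
  rw [e, integral_indicator measurableSet_Iic, setIntegral_const, smul_eq_mul, mul_one,
      measureReal_def, Measure.restrict_apply measurableSet_Iic]
  have hset : Iic x ∩ Icc (-R) R = Icc (-R) x := by
    ext a; simp only [mem_inter_iff, mem_Iic, mem_Icc]
    constructor
    · rintro ⟨ha, hb, _⟩; exact ⟨hb, ha⟩
    · rintro ⟨ha, hb⟩; exact ⟨hb, ha, by linarith⟩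
  rw [hset, Real.volume_Icc, ENNReal.toReal_ofReal (by linarith)]
  ring

section hoeffding

variable {Ω : Type*} [MeasurableSpace Ω] (μ : Measure Ω) [IsProbabilityMeasure μ]

lemma indMul_eq_indicator (X Y : Ω → ℝ) (a b : ℝ) :
    (fun ω => (if a ≤ X ω then (1:ℝ) else 0) * (if b ≤ Y ω then (1:ℝ) else 0))
      = ({ω | a ≤ X ω ∧ b ≤ Y ω}).indicator (fun _ => (1:ℝ)) := by
  funext ω
  by_cases h1 : a ≤ X ω <;> by_cases h2 : b ≤ Y ω <;>
    simp [h1, h2, indicator_apply]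

lemma integral_indMul (X Y : Ω → ℝ) (hX : Measurable X) (hY : Measurable Y) (a b : ℝ) :
    ∫ ω, (if a ≤ X ω then (1:ℝ) else 0) * (if b ≤ Y ω then (1:ℝ) else 0) ∂μ
      = (μ {ω | a ≤ X ω ∧ b ≤ Y ω}).toReal := by
  rw [indMul_eq_indicator]
  have hs : MeasurableSet {ω | a ≤ X ω ∧ b ≤ Y ω} := by
    have : {ω | a ≤ X ω ∧ b ≤ Y ω} = {ω | a ≤ X ω} ∩ {ω | b ≤ Y ω} := rfl
    rw [this]
    exact (measurableSet_le measurable_const hX).inter (measurableSet_le measurable_const hY)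
  rw [integral_indicator hs, setIntegral_const, smul_eq_mul, mul_one, measureReal_def]

lemma integral_ind (X : Ω → ℝ) (hX : Measurable X) (a : ℝ) :
    ∫ ω, (if a ≤ X ω then (1:ℝ) else 0) ∂μ = (μ {ω | a ≤ X ω}).toReal := by
  have e : (fun ω => if a ≤ X ω then (1:ℝ) else 0) = ({ω | a ≤ X ω}).indicator (fun _ => (1:ℝ)) := by
    funext ω; by_cases h : a ≤ X ω <;> simp [h, indicator_apply]
  rw [e, integral_indicator (measurableSet_le measurable_const hX), setIntegral_const,
      smul_eq_mul, mul_one, measureReal_def]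

lemma indIicIntegrable (m : Measure ℝ) [IsFiniteMeasure m] (x : ℝ) :
    Integrable (fun a : ℝ => if a ≤ x then (1:ℝ) else 0) m := by
  apply bddInt _ (Measurable.aestronglyMeasurable ?_) (C := 1) ?_
  · exact Measurable.ite measurableSet_Iic measurable_const measurable_const
  · intro a; split_ifs <;> simp

lemma hoeffding (X Y : Ω → ℝ) (hX : Measurable X) (hY : Measurable Y) {R : ℝ}
    (hXb : ∀ ω, |X ω| ≤ R) (hYb : ∀ ω, |Y ω| ≤ R) :
    (∫ ω, X ω * Y ω ∂μ) - (∫ ω, X ω ∂μ) * (∫ ω, Y ω ∂μ)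
      = ∫ z, ((μ {ω | z.1 ≤ X ω ∧ z.2 ≤ Y ω}).toReal
            - (μ {ω | z.1 ≤ X ω}).toReal * (μ {ω | z.2 ≤ Y ω}).toReal)
          ∂((volume.restrict (Icc (-R) R)).prod (volume.restrict (Icc (-R) R))) := by
  set ν := volume.restrict (Icc (-R) R) with hνdef
  haveI : IsFiniteMeasure ν := by
    constructor
    rw [hνdef, Measure.restrict_apply_univ]
    exact measure_Icc_lt_top
  -- step A : pointwise kernel representation
  have key : ∀ w : Ω × Ω, (X w.1 - X w.2) * (Y w.1 - Y w.2)
      = ∫ z : ℝ × ℝ, ((if z.1 ≤ X w.1 then (1:ℝ) else 0) - (if z.1 ≤ X w.2 then (1:ℝ) else 0))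
          * ((if z.2 ≤ Y w.1 then (1:ℝ) else 0) - (if z.2 ≤ Y w.2 then (1:ℝ) else 0))
          ∂(ν.prod ν) := by
    intro w
    rw [integral_prod_mul
        (f := fun a => (if a ≤ X w.1 then (1:ℝ) else 0) - (if a ≤ X w.2 then (1:ℝ) else 0))
        (g := fun b => (if b ≤ Y w.1 then (1:ℝ) else 0) - (if b ≤ Y w.2 then (1:ℝ) else 0)),
      integral_sub (indIicIntegrable ν _) (indIicIntegrable ν _),
      integral_sub (indIicIntegrable ν _) (indIicIntegrable ν _)]
    rw [hνdef]
    rw [L0 (abs_le.mp (hXb w.1)).1 (abs_le.mp (hXb w.1)).2,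
        L0 (abs_le.mp (hXb w.2)).1 (abs_le.mp (hXb w.2)).2,
        L0 (abs_le.mp (hYb w.1)).1 (abs_le.mp (hYb w.1)).2,
        L0 (abs_le.mp (hYb w.2)).1 (abs_le.mp (hYb w.2)).2]
    ring
  -- integrability of products over μ.prod μ
  have hXYbdd : ∀ (f g : Ω → ℝ), Measurable f → Measurable g → (∀ ω, |f ω| ≤ R) →
      (∀ ω, |g ω| ≤ R) → ∀ (i j : Ω × Ω → Ω),  Measurable i → Measurable j →
      Integrable (fun w : Ω × Ω => f (i w) * g (j w)) (μ.prod μ) := by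
    intro f g hf hg hfb hgb i j hi hj
    apply bddInt _ (((hf.comp hi).mul (hg.comp hj)).aestronglyMeasurable) (C := R*R)
    intro w
    show |f (i w) * g (j w)| ≤ R * R
    rw [abs_mul]
    exact mul_le_mul (hfb (i w)) (hgb (j w)) (abs_nonneg _)
      ((abs_nonneg (f (i w))).trans (hfb (i w)))
  -- step C : expansion of the doubled covariance
  have lhs2 : ∫ w : Ω × Ω, (X w.1 - X w.2) * (Y w.1 - Y w.2) ∂(μ.prod μ)
      = 2 * ((∫ ω, X ω * Y ω ∂μ) - (∫ ω, X ω ∂μ) * (∫ ω, Y ω ∂μ)) := by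
    have i11 : ∫ w : Ω × Ω, X w.1 * Y w.1 ∂(μ.prod μ) = ∫ ω, X ω * Y ω ∂μ := by
      simpa using integral_prod_mul (μ := μ) (ν := μ) (fun ω => X ω * Y ω) (fun _ => (1:ℝ))
    have i12 : ∫ w : Ω × Ω, X w.1 * Y w.2 ∂(μ.prod μ) = (∫ ω, X ω ∂μ) * (∫ ω, Y ω ∂μ) := by
      simpa using integral_prod_mul (μ := μ) (ν := μ) X Y
    have i21 : ∫ w : Ω × Ω, Y w.1 * X w.2 ∂(μ.prod μ) = (∫ ω, X ω ∂μ) * (∫ ω, Y ω ∂μ) := by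
      rw [integral_prod_mul (μ := μ) (ν := μ) Y X]; ring
    have i22 : ∫ w : Ω × Ω, X w.2 * Y w.2 ∂(μ.prod μ) = ∫ ω, X ω * Y ω ∂μ := by
      simpa using integral_prod_mul (μ := μ) (ν := μ) (fun _ => (1:ℝ)) (fun ω => X ω * Y ω)
    have e : (fun w : Ω × Ω => (X w.1 - X w.2) * (Y w.1 - Y w.2))
        = fun w : Ω × Ω => (1:ℝ) * (X w.1 * Y w.1) + ((-1) * (X w.1 * Y w.2)
            + ((-1) * (Y w.1 * X w.2) + (1:ℝ) * (X w.2 * Y w.2))) := by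
      funext w; ring
    rw [e, integral_comb4 _ _ _ _ _
        (hXYbdd X Y hX hY hXb hYb _ _ measurable_fst measurable_fst)
        (hXYbdd X Y hX hY hXb hYb _ _ measurable_fst measurable_snd)
        (hXYbdd Y X hY hX hYb hXb _ _ measurable_fst measurable_snd)
        (hXYbdd X Y hX hY hXb hYb _ _ measurable_snd measurable_snd),
      i11, i12, i21, i22]
    ring
  -- step D : inner integral over μ.prod μ for fixed z
  have inner : ∀ z : ℝ × ℝ,
      (∫ w : Ω × Ω, ((if z.1 ≤ X w.1 then (1:ℝ) else 0) - (if z.1 ≤ X w.2 then (1:ℝ) else 0))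
          * ((if z.2 ≤ Y w.1 then (1:ℝ) else 0) - (if z.2 ≤ Y w.2 then (1:ℝ) else 0)) ∂(μ.prod μ))
      = 2 * ((μ {ω | z.1 ≤ X ω ∧ z.2 ≤ Y ω}).toReal
          - (μ {ω | z.1 ≤ X ω}).toReal * (μ {ω | z.2 ≤ Y ω}).toReal) := by
    intro z
    have hbd1 : ∀ (f g : Ω → ℝ) (a b : ℝ), Measurable f → Measurable g → ∀ (i j : Ω × Ω → Ω),
        Measurable i → Measurable j →
        Integrable (fun w : Ω × Ω =>
          (if a ≤ f (i w) then (1:ℝ) else 0) * (if b ≤ g (j w) then (1:ℝ) else 0))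
          (μ.prod μ) := by
      intro f g a b hf hg i j hi hj
      apply bddInt _ (Measurable.aestronglyMeasurable ?_) (C := 1) ?_
      · exact ((Measurable.ite (measurableSet_le measurable_const (hf.comp hi))
          measurable_const measurable_const).mul
          (Measurable.ite (measurableSet_le measurable_const (hg.comp hj))
          measurable_const measurable_const))
      · intro w; split_ifs <;> norm_num
    have j11 : ∫ w : Ω × Ω, (if z.1 ≤ X w.1 then (1:ℝ) else 0)
        * (if z.2 ≤ Y w.1 then (1:ℝ) else 0) ∂(μ.prod μ)
        = (μ {ω | z.1 ≤ X ω ∧ z.2 ≤ Y ω}).toReal := by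
      have h1 := integral_prod_mul (μ := μ) (ν := μ)
        (fun ω => (if z.1 ≤ X ω then (1:ℝ) else 0) * (if z.2 ≤ Y ω then (1:ℝ) else 0))
        (fun _ => (1:ℝ))
      simp only [integral_indMul μ X Y hX hY z.1 z.2] at h1
      simpa using h1
    have j22 : ∫ w : Ω × Ω, (if z.1 ≤ X w.2 then (1:ℝ) else 0)
        * (if z.2 ≤ Y w.2 then (1:ℝ) else 0) ∂(μ.prod μ)
        = (μ {ω | z.1 ≤ X ω ∧ z.2 ≤ Y ω}).toReal := by
      have h1 := integral_prod_mul (μ := μ) (ν := μ) (fun _ => (1:ℝ))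
        (fun ω => (if z.1 ≤ X ω then (1:ℝ) else 0) * (if z.2 ≤ Y ω then (1:ℝ) else 0))
      simp only [integral_indMul μ X Y hX hY z.1 z.2] at h1
      simpa using h1
    have j12 : ∫ w : Ω × Ω, (if z.1 ≤ X w.1 then (1:ℝ) else 0)
        * (if z.2 ≤ Y w.2 then (1:ℝ) else 0) ∂(μ.prod μ)
        = (μ {ω | z.1 ≤ X ω}).toReal * (μ {ω | z.2 ≤ Y ω}).toReal := by
      have := integral_prod_mul (μ := μ) (ν := μ)
        (fun ω => (if z.1 ≤ X ω then (1:ℝ) else 0)) (fun ω => (if z.2 ≤ Y ω then (1:ℝ) else 0))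
      simpa [integral_ind μ X hX z.1, integral_ind μ Y hY z.2] using this
    have j21 : ∫ w : Ω × Ω, (if z.2 ≤ Y w.1 then (1:ℝ) else 0)
        * (if z.1 ≤ X w.2 then (1:ℝ) else 0) ∂(μ.prod μ)
        = (μ {ω | z.1 ≤ X ω}).toReal * (μ {ω | z.2 ≤ Y ω}).toReal := by
      have := integral_prod_mul (μ := μ) (ν := μ)
        (fun ω => (if z.2 ≤ Y ω then (1:ℝ) else 0)) (fun ω => (if z.1 ≤ X ω then (1:ℝ) else 0))
      rw [integral_ind μ X hX z.1, integral_ind μ Y hY z.2] at this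
      rw [this]; ring
    have e : (fun w : Ω × Ω =>
        ((if z.1 ≤ X w.1 then (1:ℝ) else 0) - (if z.1 ≤ X w.2 then (1:ℝ) else 0))
          * ((if z.2 ≤ Y w.1 then (1:ℝ) else 0) - (if z.2 ≤ Y w.2 then (1:ℝ) else 0)))
        = fun w : Ω × Ω =>
          (1:ℝ) * ((if z.1 ≤ X w.1 then (1:ℝ) else 0) * (if z.2 ≤ Y w.1 then (1:ℝ) else 0))
          + ((-1) * ((if z.1 ≤ X w.1 then (1:ℝ) else 0) * (if z.2 ≤ Y w.2 then (1:ℝ) else 0))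
          + ((-1) * ((if z.2 ≤ Y w.1 then (1:ℝ) else 0) * (if z.1 ≤ X w.2 then (1:ℝ) else 0))
          + (1:ℝ) * ((if z.1 ≤ X w.2 then (1:ℝ) else 0) * (if z.2 ≤ Y w.2 then (1:ℝ) else 0)))) := by
      funext w; ring
    rw [e, integral_comb4 _ _ _ _ _
        (hbd1 X Y z.1 z.2 hX hY _ _ measurable_fst measurable_fst)
        (hbd1 X Y z.1 z.2 hX hY _ _ measurable_fst measurable_snd)
        (hbd1 Y X z.2 z.1 hY hX _ _ measurable_fst measurable_snd)
        (hbd1 X Y z.1 z.2 hX hY _ _ measurable_snd measurable_snd),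
      j11, j12, j21, j22]
    ring
  -- step B : Fubini swap and conclusion
  have hGint : Integrable (Function.uncurry (fun (w : Ω × Ω) (z : ℝ × ℝ) =>
      ((if z.1 ≤ X w.1 then (1:ℝ) else 0) - (if z.1 ≤ X w.2 then (1:ℝ) else 0))
        * ((if z.2 ≤ Y w.1 then (1:ℝ) else 0) - (if z.2 ≤ Y w.2 then (1:ℝ) else 0))))
      ((μ.prod μ).prod (ν.prod ν)) := by
    apply bddInt _ (Measurable.aestronglyMeasurable ?_) (C := 1) ?_
    · show Measurable fun p : (Ω × Ω) × ℝ × ℝ =>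
        ((if p.2.1 ≤ X p.1.1 then (1:ℝ) else 0) - (if p.2.1 ≤ X p.1.2 then (1:ℝ) else 0))
          * ((if p.2.2 ≤ Y p.1.1 then (1:ℝ) else 0) - (if p.2.2 ≤ Y p.1.2 then (1:ℝ) else 0))
      apply Measurable.mul
      · exact (Measurable.ite (measurableSet_le measurable_snd.fst (hX.comp measurable_fst.fst))
            measurable_const measurable_const).sub
          (Measurable.ite (measurableSet_le measurable_snd.fst (hX.comp measurable_fst.snd))
            measurable_const measurable_const)
      · exact (Measurable.ite (measurableSet_le measurable_snd.snd (hY.comp measurable_fst.fst))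
            measurable_const measurable_const).sub
          (Measurable.ite (measurableSet_le measurable_snd.snd (hY.comp measurable_fst.snd))
            measurable_const measurable_const)
    · rintro ⟨w, z⟩
      simp only [Function.uncurry]
      split_ifs <;> norm_num
  have swap := integral_integral_swap hGint
  have e1 : ∫ w : Ω × Ω, (X w.1 - X w.2) * (Y w.1 - Y w.2) ∂(μ.prod μ)
      = ∫ w : Ω × Ω, (∫ z : ℝ × ℝ,
          ((if z.1 ≤ X w.1 then (1:ℝ) else 0) - (if z.1 ≤ X w.2 then (1:ℝ) else 0))
          * ((if z.2 ≤ Y w.1 then (1:ℝ) else 0) - (if z.2 ≤ Y w.2 then (1:ℝ) else 0))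
          ∂(ν.prod ν)) ∂(μ.prod μ) :=
    integral_congr_ae (Filter.Eventually.of_forall key)
  have e2 : ∫ z : ℝ × ℝ, (∫ w : Ω × Ω,
        ((if z.1 ≤ X w.1 then (1:ℝ) else 0) - (if z.1 ≤ X w.2 then (1:ℝ) else 0))
        * ((if z.2 ≤ Y w.1 then (1:ℝ) else 0) - (if z.2 ≤ Y w.2 then (1:ℝ) else 0))
        ∂(μ.prod μ)) ∂(ν.prod ν)
      = ∫ z : ℝ × ℝ, 2 * ((μ {ω | z.1 ≤ X ω ∧ z.2 ≤ Y ω}).toReal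
          - (μ {ω | z.1 ≤ X ω}).toReal * (μ {ω | z.2 ≤ Y ω}).toReal) ∂(ν.prod ν) :=
    integral_congr_ae (Filter.Eventually.of_forall inner)
  rw [integral_const_mul] at e2
  have final : 2 * ((∫ ω, X ω * Y ω ∂μ) - (∫ ω, X ω ∂μ) * (∫ ω, Y ω ∂μ))
      = 2 * ∫ z : ℝ × ℝ, ((μ {ω | z.1 ≤ X ω ∧ z.2 ≤ Y ω}).toReal
          - (μ {ω | z.1 ≤ X ω}).toReal * (μ {ω | z.2 ≤ Y ω}).toReal) ∂(ν.prod ν) := by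
    rw [← lhs2, e1, swap, e2]
  linarith

end hoeffding

/-! ### Fubini-Gram and Cauchy-Schwarz -/

open scoped ENNReal

lemma fubini_gram (m : Measure ℝ) [IsFiniteMeasure m] (f g : ℝ → ℝ → ℝ)
    (hf : Measurable (Function.uncurry f)) (hg : Measurable (Function.uncurry g))
    (hCf : ∀ a u, |f a u| ≤ 1) (hCg : ∀ b u, |g b u| ≤ 1) :
    ∫ u in Ioo (0:ℝ) 1, (∫ a, f a u ∂m) * (∫ b, g b u ∂m)
      = ∫ z : ℝ × ℝ, (∫ u in Ioo (0:ℝ) 1, f z.1 u * g z.2 u) ∂(m.prod m) := by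
  have step1 : ∀ u : ℝ, (∫ a, f a u ∂m) * (∫ b, g b u ∂m)
      = ∫ z : ℝ × ℝ, f z.1 u * g z.2 u ∂(m.prod m) := fun u =>
    (integral_prod_mul (fun a => f a u) (fun b => g b u)).symm
  rw [integral_congr_ae (Filter.Eventually.of_forall step1)]
  apply integral_integral_swap
  apply bddInt _ (Measurable.aestronglyMeasurable ?_) (C := 1) ?_
  · show Measurable fun p : ℝ × ℝ × ℝ => f p.2.1 p.1 * g p.2.2 p.1
    exact (hf.comp (measurable_snd.fst.prodMk measurable_fst)).mul
      (hg.comp (measurable_snd.snd.prodMk measurable_fst))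
  · rintro ⟨u, z⟩
    simp only [Function.uncurry]
    calc |f z.1 u * g z.2 u| = |f z.1 u| * |g z.2 u| := abs_mul _ _
    _ ≤ 1 * 1 := mul_le_mul (hCf _ _) (hCg _ _) (abs_nonneg _) zero_le_one
    _ = 1 := by norm_num

lemma cauchy_schwarz_int {α : Type*} [MeasurableSpace α] (m : Measure α) [IsFiniteMeasure m]
    (A B : α → ℝ) (hAA : Integrable (fun u => A u * A u) m)
    (hBB : Integrable (fun u => B u * B u) m) (hAB : Integrable (fun u => A u * B u) m) :
    (∫ u, A u * B u ∂m)^2 ≤ (∫ u, A u * A u ∂m) * (∫ u, B u * B u ∂m) := by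
  have q : ∀ t : ℝ, 0 ≤ (∫ u, A u * A u ∂m) * (t*t) + (2 * ∫ u, A u * B u ∂m) * t
      + ∫ u, B u * B u ∂m := by
    intro t
    have h0 : 0 ≤ ∫ u, (t * A u + B u) * (t * A u + B u) ∂m :=
      integral_nonneg fun u => mul_self_nonneg _
    have e : (fun u => (t * A u + B u) * (t * A u + B u))
        = fun u => (t*t) * (A u * A u) + ((2*t) * (A u * B u)
            + ((1:ℝ) * (B u * B u) + 0 * (B u * B u))) := by
      funext u; ring
    rw [e, integral_comb4 _ _ _ _ _ hAA hAB hBB hBB] at h0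
    nlinarith [h0]
  have hd := discrim_le_zero q
  rw [discrim] at hd
  nlinarith [hd]

/-! ### Main theorem, bounded case -/

theorem bounded_main {Ω : Type*} [MeasurableSpace Ω] (μ : Measure Ω) [IsProbabilityMeasure μ]
    (X Y : Ω → ℝ) (hX : Measurable X) (hY : Measurable Y) {R : ℝ}
    (hXb : ∀ ω, |X ω| ≤ R) (hYb : ∀ ω, |Y ω| ≤ R)
    (c : ℝ) (hc0 : 0 ≤ c) (hc1 : c < 1)
    (hcond : ∀ a b : ℝ,
      c * (μ {ω | a ≤ X ω}).toReal * (μ {ω | b ≤ Y ω}).toReal ≤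
        (μ {ω | a ≤ X ω ∧ b ≤ Y ω}).toReal) :
    (∫ ω, X ω * Y ω ∂μ) - (∫ ω, X ω ∂μ) * (∫ ω, Y ω ∂μ) ≥
      -Real.sqrt ((1 - c) * ((∫ ω, X ω ^ 2 ∂μ) - (∫ ω, X ω ∂μ) ^ 2) *
        ((∫ ω, Y ω ^ 2 ∂μ) - (∫ ω, Y ω ∂μ) ^ 2)) := by
  classical
  -- nonemptiness and R ≥ 0
  have hne : Nonempty Ω := by
    rcases isEmpty_or_nonempty Ω with h | h
    · exfalso
      have h1 : μ univ = 1 := measure_univ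
      rw [Set.univ_eq_empty_iff.mpr h, measure_empty] at h1
      exact zero_ne_one h1
    · exact h
  have hR0 : (0:ℝ) ≤ R := (abs_nonneg _).trans (hXb hne.some)
  set ν := volume.restrict (Icc (-R) R) with hνdef
  haveI hνfin : IsFiniteMeasure ν := by
    constructor; rw [hνdef, Measure.restrict_apply_univ]; exact measure_Icc_lt_top
  -- names for the survival functions
  set P : ℝ → ℝ := fun a => (μ {ω | a ≤ X ω}).toReal with hPdef
  set Q : ℝ → ℝ := fun b => (μ {ω | b ≤ Y ω}).toReal with hQdef
  set Sf : ℝ → ℝ → ℝ := fun a b => (μ {ω | a ≤ X ω ∧ b ≤ Y ω}).toReal with hSdef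
  have htoReal01 : ∀ s : Set Ω, (μ s).toReal ∈ Icc (0:ℝ) 1 := by
    intro s
    refine ⟨ENNReal.toReal_nonneg, ?_⟩
    have h2 := ENNReal.toReal_mono (measure_ne_top μ univ) (measure_mono (subset_univ s))
    simpa [measure_univ] using h2
  have hP01 : ∀ a, P a ∈ Icc (0:ℝ) 1 := fun a => htoReal01 _
  have hQ01 : ∀ b, Q b ∈ Icc (0:ℝ) 1 := fun b => htoReal01 _
  have hS01 : ∀ a b, Sf a b ∈ Icc (0:ℝ) 1 := fun a b => htoReal01 _
  have hPanti : ∀ ⦃a a' : ℝ⦄, a ≤ a' → P a' ≤ P a := by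
    intro a a' h
    exact ENNReal.toReal_mono (measure_ne_top μ _)
      (measure_mono (fun ω hω => le_trans h hω))
  have hQanti : ∀ ⦃b b' : ℝ⦄, b ≤ b' → Q b' ≤ Q b := by
    intro b b' h
    exact ENNReal.toReal_mono (measure_ne_top μ _)
      (measure_mono (fun ω hω => le_trans h hω))
  have hPm : Measurable P := Antitone.measurable (fun a a' h => hPanti h)
  have hQm : Measurable Q := Antitone.measurable (fun b b' h => hQanti h)
  -- measurability and bounds for φ and ψ
  have hphiMeas : Measurable (Function.uncurry
      (fun a u => (if u < P a then (1:ℝ) else 0) - P a)) := by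
    show Measurable fun p : ℝ × ℝ => (if p.2 < P p.1 then (1:ℝ) else 0) - P p.1
    exact (Measurable.ite (measurableSet_lt measurable_snd (hPm.comp measurable_fst))
      measurable_const measurable_const).sub (hPm.comp measurable_fst)
  have hphiBdd : ∀ a u, |(if u < P a then (1:ℝ) else 0) - P a| ≤ 1 := by
    intro a u
    have h := hP01 a
    rw [abs_le]
    split_ifs <;> constructor <;> linarith [h.1, h.2]
  have hxiMeas : Measurable (fun b => (1 - Q b)/(1 - c * Q b)) :=
    (measurable_const.sub hQm).div (measurable_const.sub (hQm.const_mul c))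
  have hpsiMeas : Measurable (Function.uncurry (fun b u => psif c (Q b) u)) := by
    show Measurable fun p : ℝ × ℝ =>
      (1 - c * Q p.1) * ((1 - (1 - Q p.1)/(1 - c * Q p.1))
        - (if (1 - Q p.1)/(1 - c * Q p.1) < p.2 then (1:ℝ) else 0))
    apply Measurable.mul
    · exact (measurable_const.sub ((hQm.comp measurable_fst).const_mul c))
    · exact (measurable_const.sub (hxiMeas.comp measurable_fst)).sub
        (Measurable.ite (measurableSet_lt (hxiMeas.comp measurable_fst) measurable_snd)
          measurable_const measurable_const)
  have hpsiBdd : ∀ b u, |psif c (Q b) u| ≤ 1 := by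
    intro b u
    have hq := hQ01 b
    have hb := beta_pos hc0 hc1 hq
    have hxi := xi_mem hc0 hc1 hq
    show |(1 - c * Q b) * ((1 - (1 - Q b)/(1 - c * Q b))
      - (if (1 - Q b)/(1 - c * Q b) < u then (1:ℝ) else 0))| ≤ 1
    rw [abs_mul]
    have h1 : |1 - c * Q b| ≤ 1 := by
      rw [abs_le]; constructor <;> nlinarith [hq.1, hq.2]
    have h2 : |(1 - (1 - Q b)/(1 - c * Q b))
        - (if (1 - Q b)/(1 - c * Q b) < u then (1:ℝ) else 0)| ≤ 1 := by
      rw [abs_le]; split_ifs <;> constructor <;> linarith [hxi.1, hxi.2]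
    calc |1 - c * Q b| * |_| ≤ 1 * 1 := mul_le_mul h1 h2 (abs_nonneg _) zero_le_one
    _ = 1 := by norm_num
  -- Gram identities integrated over ν ⊗ ν
  have hABgram : ∫ u in Ioo (0:ℝ) 1,
      (∫ a, ((if u < P a then (1:ℝ) else 0) - P a) ∂ν) * (∫ b, psif c (Q b) u ∂ν)
      = ∫ z : ℝ × ℝ, min ((1-c)*(P z.1 * Q z.2)) ((1 - P z.1)*(1 - Q z.2)) ∂(ν.prod ν) := by
    have h1 := fubini_gram ν (fun a u => (if u < P a then (1:ℝ) else 0) - P a)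
      (fun b u => psif c (Q b) u) hphiMeas hpsiMeas hphiBdd hpsiBdd
    exact h1.trans (integral_congr_ae (Filter.Eventually.of_forall fun z =>
      gramXY hc0 hc1 (hP01 z.1) (hQ01 z.2)))
  have hAAgram : ∫ u in Ioo (0:ℝ) 1,
      (∫ a, ((if u < P a then (1:ℝ) else 0) - P a) ∂ν)
        * (∫ a, ((if u < P a then (1:ℝ) else 0) - P a) ∂ν)
      = ∫ z : ℝ × ℝ, (min (P z.1) (P z.2) - P z.1 * P z.2) ∂(ν.prod ν) := by
    have h1 := fubini_gram ν (fun a u => (if u < P a then (1:ℝ) else 0) - P a)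
      (fun a u => (if u < P a then (1:ℝ) else 0) - P a) hphiMeas hphiMeas hphiBdd hphiBdd
    exact h1.trans (integral_congr_ae (Filter.Eventually.of_forall fun z =>
      gramXX (hP01 z.1) (hP01 z.2)))
  have hBBgram : ∫ u in Ioo (0:ℝ) 1,
      (∫ b, psif c (Q b) u ∂ν) * (∫ b, psif c (Q b) u ∂ν)
      = ∫ z : ℝ × ℝ, (1-c) * (min (Q z.1) (Q z.2) - Q z.1 * Q z.2) ∂(ν.prod ν) := by
    have h1 := fubini_gram ν (fun b u => psif c (Q b) u)
      (fun b u => psif c (Q b) u) hpsiMeas hpsiMeas hpsiBdd hpsiBdd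
    exact h1.trans (integral_congr_ae (Filter.Eventually.of_forall fun z =>
      gramYY hc0 hc1 (hQ01 z.1) (hQ01 z.2)))
  -- Hoeffding identities
  have hoefXY : (∫ ω, X ω * Y ω ∂μ) - (∫ ω, X ω ∂μ) * (∫ ω, Y ω ∂μ)
      = ∫ z : ℝ × ℝ, (Sf z.1 z.2 - P z.1 * Q z.2) ∂(ν.prod ν) :=
    hoeffding μ X Y hX hY hXb hYb
  have hminXX : ∀ z : ℝ × ℝ, (μ {ω | z.1 ≤ X ω ∧ z.2 ≤ X ω}).toReal = min (P z.1) (P z.2) := by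
    intro z
    have hset : {ω | z.1 ≤ X ω ∧ z.2 ≤ X ω} = {ω | max z.1 z.2 ≤ X ω} := by
      ext ω; simp [max_le_iff]
    rw [hset]
    rcases le_total z.1 z.2 with h | h
    · rw [max_eq_right h, min_eq_right (hPanti h)]
    · rw [max_eq_left h, min_eq_left (hPanti h)]
  have hminYY : ∀ z : ℝ × ℝ, (μ {ω | z.1 ≤ Y ω ∧ z.2 ≤ Y ω}).toReal = min (Q z.1) (Q z.2) := by
    intro z
    have hset : {ω | z.1 ≤ Y ω ∧ z.2 ≤ Y ω} = {ω | max z.1 z.2 ≤ Y ω} := by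
      ext ω; simp [max_le_iff]
    rw [hset]
    rcases le_total z.1 z.2 with h | h
    · rw [max_eq_right h, min_eq_right (hQanti h)]
    · rw [max_eq_left h, min_eq_left (hQanti h)]
  have hVarXX : (∫ ω, X ω ^ 2 ∂μ) - (∫ ω, X ω ∂μ)^2
      = ∫ z : ℝ × ℝ, (min (P z.1) (P z.2) - P z.1 * P z.2) ∂(ν.prod ν) := by
    have e1 : ∫ ω, X ω ^ 2 ∂μ = ∫ ω, X ω * X ω ∂μ := by
      apply integral_congr_ae; filter_upwards with ω; ring
    rw [e1, sq, hoeffding μ X X hX hX hXb hXb]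
    apply integral_congr_ae; filter_upwards with z
    rw [hminXX z]
  have hVarYY : (∫ ω, Y ω ^ 2 ∂μ) - (∫ ω, Y ω ∂μ)^2
      = ∫ z : ℝ × ℝ, (min (Q z.1) (Q z.2) - Q z.1 * Q z.2) ∂(ν.prod ν) := by
    have e1 : ∫ ω, Y ω ^ 2 ∂μ = ∫ ω, Y ω * Y ω ∂μ := by
      apply integral_congr_ae; filter_upwards with ω; ring
    rw [e1, sq, hoeffding μ Y Y hY hY hYb hYb]
    apply integral_congr_ae; filter_upwards with z
    rw [hminYY z]
  -- integrability over ν ⊗ ν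
  have hSm : Measurable (fun z : ℝ × ℝ => Sf z.1 z.2) := by
    show Measurable fun z : ℝ × ℝ => (μ {ω | z.1 ≤ X ω ∧ z.2 ≤ Y ω}).toReal
    apply Measurable.ennreal_toReal
    have e : (fun z : ℝ × ℝ => μ {ω | z.1 ≤ X ω ∧ z.2 ≤ Y ω})
        = fun z : ℝ × ℝ => ∫⁻ ω, ({p : (ℝ × ℝ) × Ω | p.1.1 ≤ X p.2 ∧ p.1.2 ≤ Y p.2}.indicator
            (fun _ => (1:ℝ≥0∞)) (z, ω)) ∂μ := by
      funext z
      have hsz : MeasurableSet {ω | z.1 ≤ X ω ∧ z.2 ≤ Y ω} :=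
        (measurableSet_le measurable_const hX).inter (measurableSet_le measurable_const hY)
      rw [← lintegral_indicator_one hsz]
      rfl
    rw [e]
    apply Measurable.lintegral_prod_right'
    exact measurable_const.indicator
      ((measurableSet_le measurable_fst.fst (hX.comp measurable_snd)).inter
        (measurableSet_le measurable_fst.snd (hY.comp measurable_snd)))
  have hDint : Integrable (fun z : ℝ × ℝ => Sf z.1 z.2 - P z.1 * Q z.2) (ν.prod ν) := by
    apply bddInt _ (Measurable.aestronglyMeasurable ?_) (C := 2) ?_
    · exact hSm.sub ((hPm.comp measurable_fst).mul (hQm.comp measurable_snd))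
    intro z
    have h1 := hS01 z.1 z.2
    have h2 := hP01 z.1
    have h3 := hQ01 z.2
    have hpq0 : 0 ≤ P z.1 * Q z.2 := mul_nonneg h2.1 h3.1
    have hpq1 : P z.1 * Q z.2 ≤ 1 := mul_le_one₀ h2.2 h3.1 h3.2
    rw [abs_le]; constructor <;> linarith [h1.1, h1.2]
  have hKint : Integrable (fun z : ℝ × ℝ =>
      min ((1-c)*(P z.1 * Q z.2)) ((1 - P z.1)*(1 - Q z.2))) (ν.prod ν) := by
    apply bddInt _ (Measurable.aestronglyMeasurable ?_) (C := 1) ?_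
    · exact Measurable.min
        (((hPm.comp measurable_fst).mul (hQm.comp measurable_snd)).const_mul (1-c))
        ((measurable_const.sub (hPm.comp measurable_fst)).mul
          (measurable_const.sub (hQm.comp measurable_snd)))
    · intro z
      have h2 := hP01 z.1
      have h3 := hQ01 z.2
      have he1 : 0 ≤ (1-c)*(P z.1 * Q z.2) :=
        mul_nonneg (by linarith) (mul_nonneg h2.1 h3.1)
      have he2 : 0 ≤ (1 - P z.1)*(1 - Q z.2) :=
        mul_nonneg (by linarith [h2.2]) (by linarith [h3.2])
      have he2' : (1 - P z.1)*(1 - Q z.2) ≤ 1 := by nlinarith [h2.1, h2.2, h3.1, h3.2]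
      have hmin1 := le_min he1 he2
      have hmin2 := min_le_right ((1-c)*(P z.1 * Q z.2)) ((1 - P z.1)*(1 - Q z.2))
      rw [abs_le]
      exact ⟨by linarith, by linarith⟩
  -- pointwise lower bound on the Hoeffding integrand
  have b2 : ∀ a b : ℝ, P a + Q b - 1 ≤ Sf a b := by
    intro a b
    have h0 : 0 ≤ ∫ ω, (1 - (if a ≤ X ω then (1:ℝ) else 0))
        * (1 - (if b ≤ Y ω then (1:ℝ) else 0)) ∂μ := by
      apply integral_nonneg
      intro ω
      show (0:ℝ) ≤ (1 - (if a ≤ X ω then (1:ℝ) else 0)) * (1 - (if b ≤ Y ω then (1:ℝ) else 0))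
      split_ifs <;> norm_num
    have hiA : Integrable (fun ω => (if a ≤ X ω then (1:ℝ) else 0)) μ := by
      apply bddInt _ (Measurable.aestronglyMeasurable ?_) (C := 1) ?_
      · exact Measurable.ite (measurableSet_le measurable_const hX)
          measurable_const measurable_const
      · intro ω; split_ifs <;> simp
    have hiB : Integrable (fun ω => (if b ≤ Y ω then (1:ℝ) else 0)) μ := by
      apply bddInt _ (Measurable.aestronglyMeasurable ?_) (C := 1) ?_
      · exact Measurable.ite (measurableSet_le measurable_const hY)
          measurable_const measurable_const
      · intro ω; split_ifs <;> simp
    have hiAB : Integrable (fun ω => (if a ≤ X ω then (1:ℝ) else 0)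
        * (if b ≤ Y ω then (1:ℝ) else 0)) μ := by
      apply bddInt _ (Measurable.aestronglyMeasurable ?_) (C := 1) ?_
      · exact (Measurable.ite (measurableSet_le measurable_const hX)
          measurable_const measurable_const).mul
          (Measurable.ite (measurableSet_le measurable_const hY)
          measurable_const measurable_const)
      · intro ω; split_ifs <;> norm_num
    have e : (fun ω => (1 - (if a ≤ X ω then (1:ℝ) else 0))
        * (1 - (if b ≤ Y ω then (1:ℝ) else 0)))
        = fun ω => (1:ℝ) * ((if a ≤ X ω then (1:ℝ) else 0) * (if b ≤ Y ω then (1:ℝ) else 0))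
          + ((-1) * (if a ≤ X ω then (1:ℝ) else 0) + ((-1) * (if b ≤ Y ω then (1:ℝ) else 0)
          + (1:ℝ) * (1:ℝ))) := by
      funext ω; ring
    rw [e, integral_comb4 _ _ _ _ _ hiAB hiA hiB (integrable_const _),
        integral_indMul μ X Y hX hY a b, integral_ind μ X hX a, integral_ind μ Y hY b,
        integral_const] at h0
    simp only [probReal_univ, measure_univ, ENNReal.toReal_one, smul_eq_mul, mul_one] at h0
    have hPa : P a = (μ {ω | a ≤ X ω}).toReal := rfl
    have hQb : Q b = (μ {ω | b ≤ Y ω}).toReal := rfl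
    have hSab : Sf a b = (μ {ω | a ≤ X ω ∧ b ≤ Y ω}).toReal := rfl
    rw [hPa, hQb, hSab]
    linarith
  have hpoint : ∀ z : ℝ × ℝ, - min ((1-c)*(P z.1 * Q z.2)) ((1 - P z.1)*(1 - Q z.2))
      ≤ Sf z.1 z.2 - P z.1 * Q z.2 := by
    intro z
    have hb1 : c * P z.1 * Q z.2 ≤ Sf z.1 z.2 := hcond z.1 z.2
    have hb2 := b2 z.1 z.2
    rcases le_total ((1-c)*(P z.1 * Q z.2)) ((1 - P z.1)*(1 - Q z.2)) with h | h
    · rw [min_eq_left h]; nlinarith [hb1]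
    · rw [min_eq_right h]; nlinarith [hb2]
  -- covariance lower bound
  have hcov : (∫ ω, X ω * Y ω ∂μ) - (∫ ω, X ω ∂μ) * (∫ ω, Y ω ∂μ)
      ≥ - ∫ z : ℝ × ℝ, min ((1-c)*(P z.1 * Q z.2)) ((1 - P z.1)*(1 - Q z.2)) ∂(ν.prod ν) := by
    rw [hoefXY]
    calc - ∫ z : ℝ × ℝ, min ((1-c)*(P z.1 * Q z.2)) ((1 - P z.1)*(1 - Q z.2)) ∂(ν.prod ν)
        = ∫ z : ℝ × ℝ, - min ((1-c)*(P z.1 * Q z.2)) ((1 - P z.1)*(1 - Q z.2)) ∂(ν.prod ν) :=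
          (integral_neg _).symm
      _ ≤ ∫ z : ℝ × ℝ, (Sf z.1 z.2 - P z.1 * Q z.2) ∂(ν.prod ν) :=
          integral_mono hKint.neg hDint (fun z => hpoint z)
  -- L² facts for A and B on (0,1)
  have hAsm : StronglyMeasurable (fun u : ℝ =>
      ∫ a, ((if u < P a then (1:ℝ) else 0) - P a) ∂ν) := by
    apply StronglyMeasurable.integral_prod_right'
      (f := fun p : ℝ × ℝ => (if p.1 < P p.2 then (1:ℝ) else 0) - P p.2)
    exact ((Measurable.ite (measurableSet_lt measurable_fst (hPm.comp measurable_snd))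
      measurable_const measurable_const).sub (hPm.comp measurable_snd)).stronglyMeasurable
  have hBsm : StronglyMeasurable (fun u : ℝ => ∫ b, psif c (Q b) u ∂ν) := by
    apply StronglyMeasurable.integral_prod_right'
      (f := fun p : ℝ × ℝ => psif c (Q p.2) p.1)
    apply Measurable.stronglyMeasurable
    show Measurable fun p : ℝ × ℝ =>
      (1 - c * Q p.2) * ((1 - (1 - Q p.2)/(1 - c * Q p.2))
        - (if (1 - Q p.2)/(1 - c * Q p.2) < p.1 then (1:ℝ) else 0))
    apply Measurable.mul
    · exact (measurable_const.sub ((hQm.comp measurable_snd).const_mul c))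
    · exact (measurable_const.sub (hxiMeas.comp measurable_snd)).sub
        (Measurable.ite (measurableSet_lt (hxiMeas.comp measurable_snd) measurable_fst)
          measurable_const measurable_const)
  have hAbdd : ∀ u : ℝ, |∫ a, ((if u < P a then (1:ℝ) else 0) - P a) ∂ν| ≤ (ν univ).toReal := by
    intro u
    have := norm_integral_le_of_norm_le_const (μ := ν)
      (f := fun a => (if u < P a then (1:ℝ) else 0) - P a) (C := 1)
      (Filter.Eventually.of_forall fun a => by simpa using hphiBdd a u)
    simpa [measureReal_def] using this
  have hBbdd : ∀ u : ℝ, |∫ b, psif c (Q b) u ∂ν| ≤ (ν univ).toReal := by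
    intro u
    have := norm_integral_le_of_norm_le_const (μ := ν)
      (f := fun b => psif c (Q b) u) (C := 1)
      (Filter.Eventually.of_forall fun b => by simpa using hpsiBdd b u)
    simpa [measureReal_def] using this
  have prodbdd : ∀ (F G : ℝ → ℝ), (∀ u, |F u| ≤ (ν univ).toReal) →
      (∀ u, |G u| ≤ (ν univ).toReal) → StronglyMeasurable F → StronglyMeasurable G →
      Integrable (fun u => F u * G u) (volume.restrict (Ioo (0:ℝ) 1)) := by
    intro F G hF hG hFm hGm
    apply bddInt _ ((hFm.mul hGm).aestronglyMeasurable) (C := (ν univ).toReal * (ν univ).toReal)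
    intro u
    show |F u * G u| ≤ (ν univ).toReal * (ν univ).toReal
    rw [abs_mul]
    exact mul_le_mul (hF u) (hG u) (abs_nonneg _) ((abs_nonneg _).trans (hF u))
  have hcs := cauchy_schwarz_int (volume.restrict (Ioo (0:ℝ) 1))
    (fun u => ∫ a, ((if u < P a then (1:ℝ) else 0) - P a) ∂ν)
    (fun u => ∫ b, psif c (Q b) u ∂ν)
    (prodbdd _ _ hAbdd hAbdd hAsm hAsm)
    (prodbdd _ _ hBbdd hBbdd hBsm hBsm)
    (prodbdd _ _ hAbdd hBbdd hAsm hBsm)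
  have hcs2 : (∫ z : ℝ × ℝ, min ((1-c)*(P z.1 * Q z.2)) ((1 - P z.1)*(1 - Q z.2)) ∂(ν.prod ν))^2
      ≤ (∫ z : ℝ × ℝ, (min (P z.1) (P z.2) - P z.1 * P z.2) ∂(ν.prod ν))
        * ((1-c) * ∫ z : ℝ × ℝ, (min (Q z.1) (Q z.2) - Q z.1 * Q z.2) ∂(ν.prod ν)) := by
    simpa only [hAAgram, hABgram, hBBgram, integral_const_mul] using hcs
  -- nonnegativity of the variances
  have hV1nn : 0 ≤ ∫ z : ℝ × ℝ, (min (P z.1) (P z.2) - P z.1 * P z.2) ∂(ν.prod ν) := by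
    rw [← hAAgram]
    exact integral_nonneg fun u => mul_self_nonneg _
  have hV2nn' : 0 ≤ ∫ z : ℝ × ℝ, (1-c) * (min (Q z.1) (Q z.2) - Q z.1 * Q z.2) ∂(ν.prod ν) := by
    rw [← hBBgram]
    exact integral_nonneg fun u => mul_self_nonneg _
  have hV2nn : 0 ≤ ∫ z : ℝ × ℝ, (min (Q z.1) (Q z.2) - Q z.1 * Q z.2) ∂(ν.prod ν) := by
    rw [integral_const_mul] at hV2nn'
    nlinarith [hV2nn']
  -- assemble
  rw [ge_iff_le, hVarXX, hVarYY]
  have hsqnn : 0 ≤ (1-c) * (∫ z : ℝ × ℝ, (min (P z.1) (P z.2) - P z.1 * P z.2) ∂(ν.prod ν))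
      * (∫ z : ℝ × ℝ, (min (Q z.1) (Q z.2) - Q z.1 * Q z.2) ∂(ν.prod ν)) :=
    mul_nonneg (mul_nonneg (by linarith) hV1nn) hV2nn
  rcases le_total (∫ z : ℝ × ℝ, min ((1-c)*(P z.1 * Q z.2)) ((1 - P z.1)*(1 - Q z.2))
      ∂(ν.prod ν)) 0 with hI | hI
  · have h2 := Real.sqrt_nonneg ((1-c)
      * (∫ z : ℝ × ℝ, (min (P z.1) (P z.2) - P z.1 * P z.2) ∂(ν.prod ν))
      * (∫ z : ℝ × ℝ, (min (Q z.1) (Q z.2) - Q z.1 * Q z.2) ∂(ν.prod ν)))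
    linarith [hcov]
  · have hI2 : (∫ z : ℝ × ℝ, min ((1-c)*(P z.1 * Q z.2)) ((1 - P z.1)*(1 - Q z.2)) ∂(ν.prod ν))
        ≤ Real.sqrt ((1-c)
          * (∫ z : ℝ × ℝ, (min (P z.1) (P z.2) - P z.1 * P z.2) ∂(ν.prod ν))
          * (∫ z : ℝ × ℝ, (min (Q z.1) (Q z.2) - Q z.1 * Q z.2) ∂(ν.prod ν))) := by
      rw [Real.le_sqrt hI hsqnn]
      nlinarith [hcs2]
    linarith [hcov]

/-! ### Truncation -/

def clamp (n : ℕ) (x : ℝ) : ℝ := max (-(n:ℝ)) (min (n:ℝ) x)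

lemma clamp_meas {Ω : Type*} [MeasurableSpace Ω] {f : Ω → ℝ} (hf : Measurable f) (n : ℕ) :
    Measurable (fun ω => clamp n (f ω)) :=
  measurable_const.max (measurable_const.min hf)

lemma clamp_abs_le (n : ℕ) (x : ℝ) : |clamp n x| ≤ (n:ℝ) := by
  have hn : (0:ℝ) ≤ n := Nat.cast_nonneg n
  rw [clamp, abs_le]
  constructor
  · exact le_max_left _ _
  · exact max_le (by linarith) (min_le_left _ _)

lemma clamp_le_abs (n : ℕ) (x : ℝ) : |clamp n x| ≤ |x| := by
  have hn : (0:ℝ) ≤ n := Nat.cast_nonneg n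
  rw [clamp, abs_le]
  constructor
  · rcases le_total (n:ℝ) |x| with h | h
    · linarith [le_max_left (-(n:ℝ)) (min (n:ℝ) x)]
    · have hxn : x ≤ (n:ℝ) := le_trans (le_abs_self x) h
      have hmin : min (n:ℝ) x = x := min_eq_right hxn
      linarith [le_max_right (-(n:ℝ)) (min (n:ℝ) x), neg_abs_le x]
  · exact max_le (by linarith [abs_nonneg x]) (le_trans (min_le_right _ _) (le_abs_self x))

lemma clamp_eventually_eq (x : ℝ) :
    (fun n : ℕ => clamp n x) =ᶠ[Filter.atTop] (fun _ => x) := by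
  filter_upwards [Filter.eventually_ge_atTop ⌈|x|⌉₊] with n hn
  have h1 : |x| ≤ (n:ℝ) := le_trans (Nat.le_ceil _) (Nat.cast_le.mpr hn)
  rw [clamp, min_eq_right (abs_le.mp h1).2, max_eq_right (abs_le.mp h1).1]

lemma clamp_tendsto (x : ℝ) :
    Filter.Tendsto (fun n : ℕ => clamp n x) Filter.atTop (nhds x) :=
  Filter.Tendsto.congr' (clamp_eventually_eq x).symm tendsto_const_nhds

lemma trunc_set_cases {Ω : Type*} (Z : Ω → ℝ) (n : ℕ) (a : ℝ) :
    {ω | a ≤ clamp n (Z ω)} = univ ∨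
    {ω | a ≤ clamp n (Z ω)} = {ω | a ≤ Z ω} ∨
    {ω | a ≤ clamp n (Z ω)} = (∅ : Set Ω) := by
  have hn : (0:ℝ) ≤ n := Nat.cast_nonneg n
  rcases le_or_gt a (-(n:ℝ)) with ha | ha
  · left
    apply eq_univ_of_forall
    intro ω
    exact le_trans ha (le_max_left _ _)
  · rcases le_or_gt a (n:ℝ) with ha2 | ha2
    · right; left
      ext ω
      simp only [mem_setOf_eq, clamp]
      constructor
      · intro h
        rcases le_max_iff.mp h with h' | h'
        · linarith
        · exact le_trans h' (min_le_right _ _)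
      · intro h
        exact le_max_of_le_right (le_min ha2 h)
    · right; right
      apply eq_empty_iff_forall_notMem.mpr
      intro ω h
      simp only [mem_setOf_eq, clamp] at h
      rcases le_max_iff.mp h with h' | h'
      · linarith
      · have := le_trans h' (min_le_left _ _)
        linarith

/-! ### Main theorem for measurable representatives -/

theorem main_measurable {Ω : Type*} [MeasurableSpace Ω] (μ : Measure Ω)
    [IsProbabilityMeasure μ] (X Y : Ω → ℝ) (hXm : Measurable X) (hYm : Measurable Y)
    (hX : MemLp X 2 μ) (hY : MemLp Y 2 μ)
    (c : ℝ) (hc0 : 0 ≤ c) (hc1 : c < 1)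
    (hcond : ∀ a b : ℝ,
      c * (μ {ω | a ≤ X ω}).toReal * (μ {ω | b ≤ Y ω}).toReal ≤
        (μ {ω | a ≤ X ω ∧ b ≤ Y ω}).toReal) :
    (∫ ω, X ω * Y ω ∂μ) - (∫ ω, X ω ∂μ) * (∫ ω, Y ω ∂μ) ≥
      -Real.sqrt ((1 - c) * ((∫ ω, X ω ^ 2 ∂μ) - (∫ ω, X ω ∂μ) ^ 2) *
        ((∫ ω, Y ω ^ 2 ∂μ) - (∫ ω, Y ω ∂μ) ^ 2)) := by
  -- condition for the truncations
  have hcondn : ∀ n : ℕ, ∀ a b : ℝ,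
      c * (μ {ω | a ≤ clamp n (X ω)}).toReal * (μ {ω | b ≤ clamp n (Y ω)}).toReal ≤
        (μ {ω | a ≤ clamp n (X ω) ∧ b ≤ clamp n (Y ω)}).toReal := by
    intro n a b
    have hpair : {ω | a ≤ clamp n (X ω) ∧ b ≤ clamp n (Y ω)}
        = {ω | a ≤ clamp n (X ω)} ∩ {ω | b ≤ clamp n (Y ω)} := rfl
    have hpair' : {ω | a ≤ X ω ∧ b ≤ Y ω} = {ω | a ≤ X ω} ∩ {ω | b ≤ Y ω} := rfl
    rw [hpair]
    rcases trunc_set_cases X n a with e | e | e <;>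
      rcases trunc_set_cases Y n b with f | f | f <;>
      rw [e, f] <;>
      (try simp only [univ_inter, inter_univ, empty_inter, inter_empty,
        measure_univ, measure_empty, ENNReal.toReal_one, ENNReal.toReal_zero]) <;>
      first
        | (rw [← hpair']; exact hcond a b)
        | nlinarith [ENNReal.toReal_nonneg (a := μ {ω | a ≤ X ω}),
            ENNReal.toReal_nonneg (a := μ {ω | b ≤ Y ω}),
            ENNReal.toReal_nonneg (a := μ (univ : Set Ω))]
  -- per-truncation inequality
  have hn_ineq : ∀ n : ℕ,
      (∫ ω, clamp n (X ω) * clamp n (Y ω) ∂μ)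
          - (∫ ω, clamp n (X ω) ∂μ) * (∫ ω, clamp n (Y ω) ∂μ) ≥
        -Real.sqrt ((1 - c) * ((∫ ω, clamp n (X ω) ^ 2 ∂μ) - (∫ ω, clamp n (X ω) ∂μ) ^ 2) *
          ((∫ ω, clamp n (Y ω) ^ 2 ∂μ) - (∫ ω, clamp n (Y ω) ∂μ) ^ 2)) := by
    intro n
    exact bounded_main μ _ _ (clamp_meas hXm n) (clamp_meas hYm n) (R := (n:ℝ))
      (fun ω => clamp_abs_le n (X ω)) (fun ω => clamp_abs_le n (Y ω)) c hc0 hc1 (hcondn n)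
  -- integrable dominating functions
  have hXint : Integrable X μ := hX.integrable one_le_two
  have hYint : Integrable Y μ := hY.integrable one_le_two
  have hX2int : Integrable (fun ω => X ω ^ 2) μ := hX.integrable_sq
  have hY2int : Integrable (fun ω => Y ω ^ 2) μ := hY.integrable_sq
  have hbound : Integrable (fun ω => (X ω ^ 2 + Y ω ^ 2) / 2) μ :=
    (hX2int.add hY2int).div_const 2
  -- convergence of all five integrals
  have T2 : Filter.Tendsto (fun n : ℕ => ∫ ω, clamp n (X ω) ∂μ) Filter.atTop
      (nhds (∫ ω, X ω ∂μ)) := by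
    apply tendsto_integral_of_dominated_convergence (fun ω => |X ω|)
      (fun n => ((clamp_meas hXm n).aestronglyMeasurable)) hXint.abs
    · intro n
      filter_upwards with ω
      simpa using clamp_le_abs n (X ω)
    · filter_upwards with ω
      exact clamp_tendsto (X ω)
  have T3 : Filter.Tendsto (fun n : ℕ => ∫ ω, clamp n (Y ω) ∂μ) Filter.atTop
      (nhds (∫ ω, Y ω ∂μ)) := by
    apply tendsto_integral_of_dominated_convergence (fun ω => |Y ω|)
      (fun n => ((clamp_meas hYm n).aestronglyMeasurable)) hYint.abs
    · intro n
      filter_upwards with ω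
      simpa using clamp_le_abs n (Y ω)
    · filter_upwards with ω
      exact clamp_tendsto (Y ω)
  have T1 : Filter.Tendsto (fun n : ℕ => ∫ ω, clamp n (X ω) * clamp n (Y ω) ∂μ) Filter.atTop
      (nhds (∫ ω, X ω * Y ω ∂μ)) := by
    apply tendsto_integral_of_dominated_convergence (fun ω => (X ω ^ 2 + Y ω ^ 2) / 2)
      (fun n => ((clamp_meas hXm n).mul (clamp_meas hYm n)).aestronglyMeasurable) hbound
    · intro n
      filter_upwards with ω
      have h1 := clamp_le_abs n (X ω)
      have h2 := clamp_le_abs n (Y ω)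
      have h3 : |clamp n (X ω) * clamp n (Y ω)| = |clamp n (X ω)| * |clamp n (Y ω)| :=
        abs_mul _ _
      have h4 : |clamp n (X ω)| * |clamp n (Y ω)| ≤ |X ω| * |Y ω| :=
        mul_le_mul h1 h2 (abs_nonneg _) (abs_nonneg _)
      have h5 : |X ω| * |Y ω| ≤ (X ω ^ 2 + Y ω ^ 2) / 2 := by
        nlinarith [sq_nonneg (|X ω| - |Y ω|), sq_abs (X ω), sq_abs (Y ω)]
      calc ‖clamp n (X ω) * clamp n (Y ω)‖ = |clamp n (X ω) * clamp n (Y ω)| := rfl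
        _ ≤ (X ω ^ 2 + Y ω ^ 2) / 2 := by rw [h3]; linarith
    · filter_upwards with ω
      exact (clamp_tendsto (X ω)).mul (clamp_tendsto (Y ω))
  have T4 : Filter.Tendsto (fun n : ℕ => ∫ ω, clamp n (X ω) ^ 2 ∂μ) Filter.atTop
      (nhds (∫ ω, X ω ^ 2 ∂μ)) := by
    apply tendsto_integral_of_dominated_convergence (fun ω => X ω ^ 2)
      (fun n => (((clamp_meas hXm n).pow_const 2).aestronglyMeasurable)) hX2int
    · intro n
      filter_upwards with ω
      have h1 := clamp_le_abs n (X ω)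
      have : |clamp n (X ω) ^ 2| = |clamp n (X ω)| ^ 2 := by
        rw [abs_pow]
      calc ‖clamp n (X ω) ^ 2‖ = |clamp n (X ω)| ^ 2 := this
        _ ≤ |X ω| ^ 2 := by nlinarith [abs_nonneg (clamp n (X ω))]
        _ = X ω ^ 2 := sq_abs _
    · filter_upwards with ω
      exact (clamp_tendsto (X ω)).pow 2
  have T5 : Filter.Tendsto (fun n : ℕ => ∫ ω, clamp n (Y ω) ^ 2 ∂μ) Filter.atTop
      (nhds (∫ ω, Y ω ^ 2 ∂μ)) := by
    apply tendsto_integral_of_dominated_convergence (fun ω => Y ω ^ 2)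
      (fun n => (((clamp_meas hYm n).pow_const 2).aestronglyMeasurable)) hY2int
    · intro n
      filter_upwards with ω
      have h1 := clamp_le_abs n (Y ω)
      have : |clamp n (Y ω) ^ 2| = |clamp n (Y ω)| ^ 2 := by
        rw [abs_pow]
      calc ‖clamp n (Y ω) ^ 2‖ = |clamp n (Y ω)| ^ 2 := this
        _ ≤ |Y ω| ^ 2 := by nlinarith [abs_nonneg (clamp n (Y ω))]
        _ = Y ω ^ 2 := sq_abs _
    · filter_upwards with ω
      exact (clamp_tendsto (Y ω)).pow 2
  -- pass to the limit
  have TL : Filter.Tendsto (fun n : ℕ =>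
      (∫ ω, clamp n (X ω) * clamp n (Y ω) ∂μ)
        - (∫ ω, clamp n (X ω) ∂μ) * (∫ ω, clamp n (Y ω) ∂μ)) Filter.atTop
      (nhds ((∫ ω, X ω * Y ω ∂μ) - (∫ ω, X ω ∂μ) * (∫ ω, Y ω ∂μ))) :=
    T1.sub (T2.mul T3)
  have TR : Filter.Tendsto (fun n : ℕ =>
      -Real.sqrt ((1 - c) * ((∫ ω, clamp n (X ω) ^ 2 ∂μ) - (∫ ω, clamp n (X ω) ∂μ) ^ 2) *
        ((∫ ω, clamp n (Y ω) ^ 2 ∂μ) - (∫ ω, clamp n (Y ω) ∂μ) ^ 2))) Filter.atTop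
      (nhds (-Real.sqrt ((1 - c) * ((∫ ω, X ω ^ 2 ∂μ) - (∫ ω, X ω ∂μ) ^ 2) *
        ((∫ ω, Y ω ^ 2 ∂μ) - (∫ ω, Y ω ∂μ) ^ 2)))) := by
    apply Filter.Tendsto.neg
    apply Filter.Tendsto.sqrt
    exact ((tendsto_const_nhds.mul (T4.sub (T2.pow 2))).mul (T5.sub (T3.pow 2)))
  exact ge_iff_le.mpr (le_of_tendsto_of_tendsto' TR TL (fun n => hn_ineq n))

end Stmt5

open MeasureTheory

/-- Theorem 2.3: if `P(X ≥ a, Y ≥ b) ≥ c·P(X ≥ a)·P(Y ≥ b)` for all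
`a, b`, with `c ∈ [0,1)`, then `Cov(X,Y) ≥ −√((1−c)·Var(X)·Var(Y))`. -/
theorem stmt_5 {Ω : Type*} [MeasurableSpace Ω] (μ : Measure Ω) [IsProbabilityMeasure μ]
    (X Y : Ω → ℝ) (hX : MemLp X 2 μ) (hY : MemLp Y 2 μ)
    (c : ℝ) (hc0 : 0 ≤ c) (hc1 : c < 1)
    (hcond : ∀ a b : ℝ,
      c * (μ {ω | a ≤ X ω}).toReal * (μ {ω | b ≤ Y ω}).toReal ≤
        (μ {ω | a ≤ X ω ∧ b ≤ Y ω}).toReal) :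
    (∫ ω, X ω * Y ω ∂μ) - (∫ ω, X ω ∂μ) * (∫ ω, Y ω ∂μ) ≥
      -Real.sqrt ((1 - c) * ((∫ ω, X ω ^ 2 ∂μ) - (∫ ω, X ω ∂μ) ^ 2) *
        ((∫ ω, Y ω ^ 2 ∂μ) - (∫ ω, Y ω ∂μ) ^ 2)) := by
  have hX₀m : Measurable (hX.1.mk X) := hX.1.stronglyMeasurable_mk.measurable
  have hY₀m : Measurable (hY.1.mk Y) := hY.1.stronglyMeasurable_mk.measurable
  have hXe : X =ᵐ[μ] hX.1.mk X := hX.1.ae_eq_mk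
  have hYe : Y =ᵐ[μ] hY.1.mk Y := hY.1.ae_eq_mk
  have hsX : ∀ a : ℝ, μ {ω | a ≤ X ω} = μ {ω | a ≤ hX.1.mk X ω} := by
    intro a
    apply measure_congr
    filter_upwards [hXe] with ω h
    show (a ≤ X ω) = (a ≤ hX.1.mk X ω)
    rw [h]
  have hsY : ∀ b : ℝ, μ {ω | b ≤ Y ω} = μ {ω | b ≤ hY.1.mk Y ω} := by
    intro b
    apply measure_congr
    filter_upwards [hYe] with ω h
    show (b ≤ Y ω) = (b ≤ hY.1.mk Y ω)
    rw [h]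
  have hsXY : ∀ a b : ℝ, μ {ω | a ≤ X ω ∧ b ≤ Y ω}
      = μ {ω | a ≤ hX.1.mk X ω ∧ b ≤ hY.1.mk Y ω} := by
    intro a b
    apply measure_congr
    filter_upwards [hXe, hYe] with ω h1 h2
    show (a ≤ X ω ∧ b ≤ Y ω) = (a ≤ hX.1.mk X ω ∧ b ≤ hY.1.mk Y ω)
    rw [h1, h2]
  have hIXY : ∫ ω, X ω * Y ω ∂μ = ∫ ω, hX.1.mk X ω * hY.1.mk Y ω ∂μ :=
    integral_congr_ae (by filter_upwards [hXe, hYe] with ω h1 h2; rw [h1, h2])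
  have hIX : ∫ ω, X ω ∂μ = ∫ ω, hX.1.mk X ω ∂μ := integral_congr_ae hXe
  have hIY : ∫ ω, Y ω ∂μ = ∫ ω, hY.1.mk Y ω ∂μ := integral_congr_ae hYe
  have hIX2 : ∫ ω, X ω ^ 2 ∂μ = ∫ ω, hX.1.mk X ω ^ 2 ∂μ :=
    integral_congr_ae (by filter_upwards [hXe] with ω h; rw [h])
  have hIY2 : ∫ ω, Y ω ^ 2 ∂μ = ∫ ω, hY.1.mk Y ω ^ 2 ∂μ :=
    integral_congr_ae (by filter_upwards [hYe] with ω h; rw [h])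
  rw [hIXY, hIX, hIY, hIX2, hIY2]
  apply Stmt5.main_measurable μ _ _ hX₀m hY₀m (hX.ae_eq hXe) (hY.ae_eq hYe) c hc0 hc1
  intro a b
  rw [← hsX a, ← hsY b, ← hsXY a b]
  exact hcond a b
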